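/- Let n ≥ 1 and p ∈ (0,1]. The function Φ_p satisfies the uniformly Muckenhoupt 𝔸_1(ℝ^n) condition: there exists a constant C > 0 such that for every t ∈ (0,∞) and every ball B ⊂ ℝ^n, (1/|B|) ∫_B Φ_p(x,t) dx ≤ C · inf_{x ∈ B} Φ_p(x,t), where |B| denotes the Lebesgue measure of B. -/

import Mathlib

open MeasureTheory Real
open scoped ENNReal Classical

set_option maxHeartbeats 4000000

noncomputable section

/-- `ℝⁿ` as a Euclidean space. -/
abbrev Rn (n : ℕ) := EuclideanSpace ℝ (Fin n)

/-- The Musielak-Orlicz growth function `Φ_p`. -/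
def Phi (n : ℕ) (p : ℝ) (x : Rn n) (t : ℝ) : ℝ :=
  if ∃ k : ℕ, (n : ℝ) * (1 / p - 1) = (k : ℝ) then
    t / (Real.log (Real.exp 1 + t) +
      (t * (1 + ‖x‖) ^ (n : ℝ)) ^ (1 - p) * (Real.log (Real.exp 1 + ‖x‖)) ^ p)
  else
    t / (Real.log (Real.exp 1 + t) + (t * (1 + ‖x‖) ^ (n : ℝ)) ^ (1 - p))

/-- The Orlicz function `φ₀(t) = t / log(e+t)`. -/
def phi0 (t : ℝ) : ℝ := t / Real.log (Real.exp 1 + t)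

/-- The weight `W_p`. -/
def Wp (n : ℕ) (p : ℝ) (x : Rn n) : ℝ :=
  if p = 1 then 1 / Real.log (Real.exp 1 + ‖x‖)
  else if ∃ k : ℕ, (n : ℝ) * (1 / p - 1) = (k : ℝ) then
    (1 + ‖x‖) ^ (-(n : ℝ) * (1 - p)) * (Real.log (Real.exp 1 + ‖x‖)) ^ (-p)
  else (1 + ‖x‖) ^ (-(n : ℝ) * (1 - p))

/-- Extension of `Φ_p(x, ·)` to `ℝ≥0∞`. -/
def PhiE (n : ℕ) (p : ℝ) (x : Rn n) (t : ℝ≥0∞) : ℝ≥0∞ :=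
  if t = ⊤ then ⊤ else ENNReal.ofReal (Phi n p x t.toReal)

/-- Extension of `φ₀` to `ℝ≥0∞`. -/
def phi0E (t : ℝ≥0∞) : ℝ≥0∞ :=
  if t = ⊤ then ⊤ else ENNReal.ofReal (phi0 t.toReal)

/-- The Luxemburg quasi-norm `‖·‖_{L^{Φ_p}}`. -/
def luxPhiNorm (n : ℕ) (p : ℝ) (F : Rn n → ℝ≥0∞) : ℝ≥0∞ :=
  sInf {lam : ℝ≥0∞ | 0 < lam ∧ (∫⁻ x : Rn n, PhiE n p x (F x / lam)) ≤ 1}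

/-- The Luxemburg norm `‖·‖_{L^{φ₀}}`. -/
def luxPhi0Norm (n : ℕ) (F : Rn n → ℝ≥0∞) : ℝ≥0∞ :=
  sInf {lam : ℝ≥0∞ | 0 < lam ∧ (∫⁻ x : Rn n, phi0E (F x / lam)) ≤ 1}

/-- The weighted quasi-norm `‖·‖_{L^p_{W_p}}`. -/
def wNorm (n : ℕ) (p : ℝ) (F : Rn n → ℝ≥0∞) : ℝ≥0∞ :=
  (∫⁻ x : Rn n, F x ^ p * ENNReal.ofReal (Wp n p x)) ^ (1 / p)

/-- The weighted norm `‖·‖_{L^1_{W_1}}`. -/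
def w1Norm (n : ℕ) (F : Rn n → ℝ≥0∞) : ℝ≥0∞ :=
  ∫⁻ x : Rn n, F x * ENNReal.ofReal (Wp n 1 x)

/-- The characteristic function of a set, `ℝ≥0∞`-valued. -/
def chi (n : ℕ) (B : Set (Rn n)) : Rn n → ℝ≥0∞ := B.indicator fun _ => 1


section AuxStatement16

lemma one_le_log_aux {s : ℝ} (hs : 0 ≤ s) : 1 ≤ Real.log (Real.exp 1 + s) := by
  calc (1:ℝ) = Real.log (Real.exp 1) := (Real.log_exp 1).symm
  _ ≤ _ := Real.log_le_log (Real.exp_pos 1) (by linarith)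


lemma aux_log_ratio {γ s R : ℝ} (hγ : 0 < γ) (hs : 0 ≤ s) (hsR : s ≤ R) :
    Real.log (Real.exp 1 + R) ≤
      (1 + 1/γ) * (((1+R)/(1+s)) ^ γ) * Real.log (Real.exp 1 + s) := by
  have hs1 : (0:ℝ) < 1 + s := by linarith
  have hR1 : (0:ℝ) < 1 + R := by linarith
  set u := (1+R)/(1+s) with hu
  have hu1 : 1 ≤ u := (one_le_div hs1).2 (by linarith)
  have hu0 : 0 < u := lt_of_lt_of_le one_pos hu1
  have huγ : 1 ≤ u ^ γ := Real.one_le_rpow hu1 hγ.le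
  have he1 : (1:ℝ) ≤ Real.exp 1 := by
    have := Real.add_one_le_exp 1; linarith
  have hℓs : 1 ≤ Real.log (Real.exp 1 + s) := by
    calc (1:ℝ) = Real.log (Real.exp 1) := (Real.log_exp 1).symm
    _ ≤ _ := Real.log_le_log (Real.exp_pos 1) (by linarith)
  have hlogu : Real.log u ≤ (u^γ - 1)/γ := by
    have h := Real.log_le_sub_one_of_pos (Real.rpow_pos_of_pos hu0 γ)
    rw [Real.log_rpow hu0] at h
    rw [le_div_iff₀ hγ]; linarith
  have step1 : Real.log (Real.exp 1 + R) ≤ Real.log (Real.exp 1 + s) + Real.log u := by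
    have h1 : Real.exp 1 + R ≤ (Real.exp 1 + s) * u := by
      rw [hu, ← mul_div_assoc, le_div_iff₀ hs1]; nlinarith
    calc Real.log (Real.exp 1 + R) ≤ Real.log ((Real.exp 1 + s) * u) :=
          Real.log_le_log (by nlinarith [Real.exp_pos 1]) h1
    _ = _ := Real.log_mul (by nlinarith [Real.exp_pos 1]) (ne_of_gt hu0)
  have hfin : Real.log (Real.exp 1 + s) + (u^γ - 1)/γ ≤
      (1 + 1/γ) * (u ^ γ) * Real.log (Real.exp 1 + s) := by
    have h2 : Real.log (Real.exp 1 + s) ≤ u^γ * Real.log (Real.exp 1 + s) :=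
      le_mul_of_one_le_left (by linarith) huγ
    have h3 : (u^γ - 1)/γ ≤ (1/γ) * (u^γ * Real.log (Real.exp 1 + s)) := by
      rw [div_le_iff₀ hγ]
      have : u^γ ≤ u^γ * Real.log (Real.exp 1 + s) := le_mul_of_one_le_right (by positivity) hℓs
      calc u^γ - 1 ≤ u^γ := by linarith
      _ ≤ u^γ * Real.log (Real.exp 1 + s) := this
      _ = 1/γ * (u^γ * Real.log (Real.exp 1 + s)) * γ := by field_simp
    nlinarith [hlogu]
  linarith [hlogu, step1, hfin]

lemma aux_g_bound {α β γ s R : ℝ} (hα : 0 ≤ α) (hβ0 : 0 ≤ β) (hβ1 : β ≤ 1)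
    (hγ : 0 < γ) (hs : 0 ≤ s) (hsR : s ≤ R) :
    ((1+R)^α * (Real.log (Real.exp 1 + R))^β) * (1+s)^(α+γ) ≤
      ((1 + 1/γ) * (1+R)^(α+γ)) * ((1+s)^α * (Real.log (Real.exp 1 + s))^β) := by
  have hs1 : (0:ℝ) < 1 + s := by linarith
  have hR1 : (0:ℝ) < 1 + R := by linarith
  have he1 : (1:ℝ) ≤ Real.exp 1 := by have := Real.add_one_le_exp 1; linarith
  have hℓs : 1 ≤ Real.log (Real.exp 1 + s) := by
    calc (1:ℝ) = Real.log (Real.exp 1) := (Real.log_exp 1).symm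
    _ ≤ _ := Real.log_le_log (Real.exp_pos 1) (by linarith)
  have hℓR : 1 ≤ Real.log (Real.exp 1 + R) := by
    calc (1:ℝ) = Real.log (Real.exp 1) := (Real.log_exp 1).symm
    _ ≤ _ := Real.log_le_log (Real.exp_pos 1) (by linarith)
  set u := (1+R)/(1+s) with hu
  have hu1 : 1 ≤ u := (one_le_div hs1).2 (by linarith)
  have hu0 : 0 < u := lt_of_lt_of_le one_pos hu1
  have huγ : 1 ≤ u ^ γ := Real.one_le_rpow hu1 hγ.le
  have hM1 : 1 ≤ (1 + 1/γ) * u ^ γ := by nlinarith [one_div_pos.2 hγ]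
  -- key : ℓR^β * (1+s)^γ ≤ (1+1/γ) * (1+R)^γ * ℓs^β
  have hlog : Real.log (Real.exp 1 + R) ≤ ((1 + 1/γ) * u ^ γ) * Real.log (Real.exp 1 + s) :=
    aux_log_ratio hγ hs hsR
  have key : (Real.log (Real.exp 1 + R))^β * (1+s)^γ ≤
      (1 + 1/γ) * (1+R)^γ * (Real.log (Real.exp 1 + s))^β := by
    have h1 : (Real.log (Real.exp 1 + R))^β ≤
        (((1 + 1/γ) * u ^ γ) * Real.log (Real.exp 1 + s))^β :=
      Real.rpow_le_rpow (by linarith) hlog hβ0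
    have h2 : (((1 + 1/γ) * u ^ γ) * Real.log (Real.exp 1 + s))^β
        = ((1 + 1/γ) * u ^ γ)^β * (Real.log (Real.exp 1 + s))^β :=
      Real.mul_rpow (by positivity) (by linarith)
    have h3 : ((1 + 1/γ) * u ^ γ)^β ≤ (1 + 1/γ) * u ^ γ := by
      calc ((1 + 1/γ) * u ^ γ)^β ≤ ((1 + 1/γ) * u ^ γ)^(1:ℝ) :=
            Real.rpow_le_rpow_of_exponent_le hM1 hβ1
      _ = _ := Real.rpow_one _
    have h4 : u ^ γ * (1+s)^γ = (1+R)^γ := by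
      rw [← Real.mul_rpow (le_of_lt hu0) hs1.le, hu, div_mul_cancel₀ _ (ne_of_gt hs1)]
    have hℓsβ : 0 ≤ (Real.log (Real.exp 1 + s))^β := Real.rpow_nonneg (by linarith) β
    calc (Real.log (Real.exp 1 + R))^β * (1+s)^γ
        ≤ (((1 + 1/γ) * u ^ γ) * (Real.log (Real.exp 1 + s))^β) * (1+s)^γ := by
          rw [h2] at h1
          exact mul_le_mul_of_nonneg_right
            (h1.trans (mul_le_mul_of_nonneg_right h3 hℓsβ)) (by positivity)
    _ = (1 + 1/γ) * (u ^ γ * (1+s)^γ) * (Real.log (Real.exp 1 + s))^β := by ring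
    _ = _ := by rw [h4]
  have hA : (0:ℝ) ≤ (1+R)^α * (1+s)^α := by positivity
  have expandR : (1+R)^(α+γ) = (1+R)^α * (1+R)^γ := Real.rpow_add hR1 _ _
  have expandS : (1+s)^(α+γ) = (1+s)^α * (1+s)^γ := Real.rpow_add hs1 _ _
  calc ((1+R)^α * (Real.log (Real.exp 1 + R))^β) * (1+s)^(α+γ)
      = ((1+R)^α * (1+s)^α) * ((Real.log (Real.exp 1 + R))^β * (1+s)^γ) := by
        rw [expandS]; ring
  _ ≤ ((1+R)^α * (1+s)^α) * ((1 + 1/γ) * (1+R)^γ * (Real.log (Real.exp 1 + s))^β) :=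
        mul_le_mul_of_nonneg_left key hA
  _ = _ := by rw [expandR]; ring


lemma intC (n : ℕ) (hn : 1 ≤ n) {α' : ℝ} (h0 : 0 < α') (hlt : α' < n) {ρ : ℝ} (hρ : 0 < ρ) :
    ∫ x in Metric.ball (0 : Rn n) ρ, (1 + ‖x‖) ^ (-α') ≤
      ((n : ℝ) / ((n:ℝ) - α')) * (volume (Metric.ball (0 : Rn n) 1)).toReal
        * ρ ^ ((n:ℝ) - α') := by
  haveI : Nonempty (Fin n) := Fin.pos_iff_nonempty.mp hn
  haveI : Nontrivial (Rn n) := inferInstance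
  have hdim : Module.finrank ℝ (Rn n) = n := finrank_euclideanSpace_fin
  set F : ℝ → ℝ := (Set.Iio ρ).indicator (fun y => (1+y)^(-α')) with hF
  have h1 : ∫ x in Metric.ball (0:Rn n) ρ, (1+‖x‖)^(-α') = ∫ x : Rn n, F ‖x‖ := by
    rw [← integral_indicator measurableSet_ball]
    congr 1; funext x
    by_cases hx : x ∈ Metric.ball (0 : Rn n) ρ
    · rw [Set.indicator_of_mem hx, hF,
        Set.indicator_of_mem (by simpa [mem_ball_zero_iff] using hx : ‖x‖ ∈ Set.Iio ρ)]
    · rw [Set.indicator_of_notMem hx, hF,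
        Set.indicator_of_notMem (by simpa [mem_ball_zero_iff] using hx : ‖x‖ ∉ Set.Iio ρ)]
  rw [h1, MeasureTheory.integral_fun_norm_addHaar volume F, hdim]
  rw [nsmul_eq_mul, smul_eq_mul]
  have hinner : ∫ y in Set.Ioi (0:ℝ), y ^ (n-1) • F y
      = ∫ y in Set.Ioo (0:ℝ) ρ, y ^ (n-1) * (1+y)^(-α') := by
    have hfun : (fun y : ℝ => y ^ (n-1) • F y)
        = fun y : ℝ => (Set.Iio ρ).indicator (fun y => y^(n-1)*(1+y)^(-α')) y := by
      funext y
      by_cases hy : y ∈ Set.Iio ρ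
      · rw [hF]; simp [Set.indicator_of_mem hy, smul_eq_mul]
      · rw [hF]; simp [Set.indicator_of_notMem hy]
    rw [hfun, setIntegral_indicator measurableSet_Iio, Set.Ioi_inter_Iio]
  rw [hinner]
  have he : (n:ℝ) - 1 - α' + 1 = (n:ℝ) - α' := by ring
  have hem1 : (-1:ℝ) < (n:ℝ) - 1 - α' := by
    have : (1:ℝ) ≤ n := by exact_mod_cast hn
    linarith
  have hg_int : IntegrableOn (fun y:ℝ => y^((n:ℝ)-1-α')) (Set.Ioo 0 ρ) := by
    have := (intervalIntegral.intervalIntegrable_rpow' (a := 0) (b := ρ) hem1).1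
    exact this.mono_set Set.Ioo_subset_Ioc_self
  have hpt : ∀ y ∈ Set.Ioo (0:ℝ) ρ, y ^ (n-1) * (1+y)^(-α') ≤ y^((n:ℝ)-1-α') := by
    intro y hy
    have hy0 : 0 < y := hy.1
    have h1 : (1+y)^(-α') ≤ y^(-α') :=
      Real.rpow_le_rpow_of_nonpos hy0 (by linarith) (by linarith)
    have h2 : y ^ (n-1) * (1+y)^(-α') ≤ y ^ (n-1) * y^(-α') :=
      mul_le_mul_of_nonneg_left h1 (by positivity)
    calc y ^ (n-1) * (1+y)^(-α') ≤ y ^ (n-1) * y^(-α') := h2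
    _ = y ^ (((n-1 : ℕ)):ℝ) * y^(-α') := by rw [Real.rpow_natCast]
    _ = y ^ (((n-1:ℕ)):ℝ) * y^(-α') := rfl
    _ = y ^ ((((n-1:ℕ)):ℝ) + (-α')) := (Real.rpow_add hy0 _ _).symm
    _ = y ^ ((n:ℝ)-1-α') := by
        congr 1
        rw [Nat.cast_sub hn]
        push_cast; ring
  have hf_int : IntegrableOn (fun y:ℝ => y ^ (n-1) * (1+y)^(-α')) (Set.Ioo 0 ρ) := by
    refine Integrable.mono' hg_int ?_ ?_
    · refine ContinuousOn.aestronglyMeasurable ?_ measurableSet_Ioo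
      refine ContinuousOn.mul (continuous_pow (n-1)).continuousOn ?_
      refine ContinuousOn.rpow_const (by fun_prop) (fun y hy => Or.inl ?_)
      have hy1 : (0:ℝ) < y := hy.1
      positivity
    · refine (ae_restrict_iff' measurableSet_Ioo).2 (Filter.Eventually.of_forall ?_)
      intro y hy
      have hy0 : 0 < y := hy.1
      rw [Real.norm_eq_abs, abs_of_nonneg (by positivity)]
      exact hpt y hy
  have hmono := setIntegral_mono_on hf_int hg_int measurableSet_Ioo hpt
  have hval : ∫ y in Set.Ioo (0:ℝ) ρ, y^((n:ℝ)-1-α') = ρ^((n:ℝ)-α') / ((n:ℝ)-α') := by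
    have h := _root_.integral_rpow (a := 0) (b := ρ) (Or.inl hem1)
    rw [intervalIntegral.integral_of_le hρ.le] at h
    rw [← MeasureTheory.integral_Ioc_eq_integral_Ioo, h, he,
      Real.zero_rpow (by linarith : (n:ℝ)-α' ≠ 0)]
    ring
  rw [hval] at hmono
  have hv0 : (0:ℝ) ≤ (volume (Metric.ball (0:Rn n) 1)).toReal := ENNReal.toReal_nonneg
  calc (n:ℝ) * ((volume (Metric.ball (0:Rn n) 1)).toReal
        * ∫ y in Set.Ioo (0:ℝ) ρ, y ^ (n-1) * (1+y)^(-α'))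
      ≤ (n:ℝ) * ((volume (Metric.ball (0:Rn n) 1)).toReal * (ρ^((n:ℝ)-α') / ((n:ℝ)-α'))) := by
        apply mul_le_mul_of_nonneg_left (mul_le_mul_of_nonneg_left hmono hv0)
        positivity
  _ = ((n : ℝ) / ((n:ℝ) - α')) * (volume (Metric.ball (0:Rn n) 1)).toReal * ρ ^ ((n:ℝ) - α') := by
        field_simp

lemma cont_aux (n : ℕ) (α' : ℝ) : Continuous (fun x : Rn n => (1 + ‖x‖) ^ (-α')) := by
  refine Continuous.rpow_const (by fun_prop) (fun x => Or.inl ?_)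
  have := norm_nonneg x; positivity

lemma integrableOn_ball_aux {n : ℕ} (f : Rn n → ℝ) (hf : Continuous f) (c : Rn n) (r : ℝ) :
    IntegrableOn f (Metric.ball c r) :=
  (hf.continuousOn.integrableOn_compact (isCompact_closedBall c r)).mono_set
    Metric.ball_subset_closedBall

lemma lemB (n : ℕ) (hn : 1 ≤ n) {α' : ℝ} (h0 : 0 < α') (hlt : α' < n) (c : Rn n) {r : ℝ}
    (hr : 0 < r) :
    ∫ x in Metric.ball c r, (1 + ‖x‖) ^ (-α') ≤
      ((3:ℝ)^n * (1 + (n:ℝ)/((n:ℝ)-α'))) * (volume (Metric.ball c r)).toReal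
        * (1 + ‖c‖ + r) ^ (-α') := by
  haveI : Nonempty (Fin n) := Fin.pos_iff_nonempty.mp hn
  haveI : Nontrivial (Rn n) := inferInstance
  have hdim : Module.finrank ℝ (Rn n) = n := finrank_euclideanSpace_fin
  have hX : (0:ℝ) < 1 + ‖c‖ + r := by have := norm_nonneg c; linarith
  have hXa : (0:ℝ) < (1 + ‖c‖ + r) ^ (-α') := Real.rpow_pos_of_pos hX _
  have hint : IntegrableOn (fun x : Rn n => (1 + ‖x‖) ^ (-α')) (Metric.ball c r) :=
    integrableOn_ball_aux _ (cont_aux n α') c r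
  have hvfin : volume (Metric.ball c r) < ⊤ := measure_ball_lt_top
  have hv0 : (0:ℝ) ≤ (volume (Metric.ball c r)).toReal := ENNReal.toReal_nonneg
  have hconst : (1:ℝ) ≤ 1 + (n:ℝ)/((n:ℝ)-α') := by
    have h1 : (0:ℝ) < (n:ℝ) - α' := by linarith
    have : (0:ℝ) ≤ (n:ℝ)/((n:ℝ)-α') := by positivity
    linarith
  have h3n : (3:ℝ)^(α') ≤ (3:ℝ)^(n:ℕ) := by
    calc (3:ℝ)^(α') ≤ (3:ℝ)^((n:ℝ)) :=
          Real.rpow_le_rpow_of_exponent_le (by norm_num) (by linarith)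
    _ = (3:ℝ)^(n:ℕ) := Real.rpow_natCast 3 n
  by_cases hcase : 2*r ≤ 1 + ‖c‖
  · -- far/small ball case
    have hpt : ∀ x ∈ Metric.ball c r, (1 + ‖x‖) ^ (-α') ≤
        (3:ℝ)^(α') * (1 + ‖c‖ + r) ^ (-α') := by
      intro x hx
      have hd : ‖x - c‖ < r := by rw [← dist_eq_norm]; exact Metric.mem_ball.1 hx
      have hcx : ‖c‖ ≤ ‖x‖ + r := by
        have := norm_sub_norm_le c x
        rw [norm_sub_rev] at this
        linarith
      have hlow : (1 + ‖c‖ + r)/3 ≤ 1 + ‖x‖ := by linarith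
      have h1 : (1 + ‖x‖) ^ (-α') ≤ ((1 + ‖c‖ + r)/3) ^ (-α') :=
        Real.rpow_le_rpow_of_nonpos (by positivity) hlow (by linarith)
      have h2 : ((1 + ‖c‖ + r)/3) ^ (-α') = (3:ℝ)^(α') * (1 + ‖c‖ + r) ^ (-α') := by
        rw [Real.div_rpow hX.le (by norm_num), Real.rpow_neg (by norm_num : (0:ℝ) ≤ 3),
          div_inv_eq_mul]
        ring
      rw [h2] at h1; exact h1
    have hcint : IntegrableOn (fun _ : Rn n => (3:ℝ)^(α') * (1 + ‖c‖ + r) ^ (-α'))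
        (Metric.ball c r) := integrableOn_const hvfin.ne
    calc ∫ x in Metric.ball c r, (1 + ‖x‖) ^ (-α')
        ≤ ∫ _x in Metric.ball c r, (3:ℝ)^(α') * (1 + ‖c‖ + r) ^ (-α') :=
          setIntegral_mono_on hint hcint measurableSet_ball hpt
    _ = (volume (Metric.ball c r)).toReal * ((3:ℝ)^(α') * (1 + ‖c‖ + r) ^ (-α')) := by
          rw [setIntegral_const]; rfl
    _ ≤ ((3:ℝ)^n * (1 + (n:ℝ)/((n:ℝ)-α'))) * (volume (Metric.ball c r)).toReal
          * (1 + ‖c‖ + r) ^ (-α') := by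
        have hb : (3:ℝ)^(α') ≤ (3:ℝ)^n * (1 + (n:ℝ)/((n:ℝ)-α')) := by
          calc (3:ℝ)^(α') ≤ (3:ℝ)^(n:ℕ) := h3n
          _ ≤ (3:ℝ)^n * (1 + (n:ℝ)/((n:ℝ)-α')) := le_mul_of_one_le_right (by positivity) hconst
        nlinarith [mul_le_mul_of_nonneg_left (mul_le_mul_of_nonneg_right hb hXa.le) hv0]
  · -- large ball case
    push_neg at hcase
    have hsub : Metric.ball c r ⊆ Metric.ball (0 : Rn n) (3*r) := by
      intro x hx
      have hd : ‖x - c‖ < r := by rw [← dist_eq_norm]; exact Metric.mem_ball.1 hx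
      have : ‖x‖ ≤ ‖x - c‖ + ‖c‖ := by
        calc ‖x‖ = ‖(x - c) + c‖ := by rw [sub_add_cancel]
        _ ≤ _ := norm_add_le _ _
      rw [mem_ball_zero_iff]
      linarith
    have hint3 : IntegrableOn (fun x : Rn n => (1 + ‖x‖) ^ (-α'))
        (Metric.ball (0 : Rn n) (3*r)) := integrableOn_ball_aux _ (cont_aux n α') _ _
    have hstep : ∫ x in Metric.ball c r, (1 + ‖x‖) ^ (-α') ≤
        ∫ x in Metric.ball (0 : Rn n) (3*r), (1 + ‖x‖) ^ (-α') := by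
      apply setIntegral_mono_set hint3
      · exact Filter.Eventually.of_forall (fun x => Real.rpow_nonneg (by positivity) _)
      · exact Filter.Eventually.of_forall hsub
    have hC := intC n hn h0 hlt (by linarith : (0:ℝ) < 3*r)
    -- volume identity
    have hvol : (volume (Metric.ball c r)).toReal
        = r^n * (volume (Metric.ball (0 : Rn n) 1)).toReal := by
      rw [Measure.addHaar_ball volume c hr.le, hdim, ENNReal.toReal_mul,
        ENNReal.toReal_ofReal (by positivity)]
    have hv1 : (0:ℝ) ≤ (volume (Metric.ball (0 : Rn n) 1)).toReal := ENNReal.toReal_nonneg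
    have hflip : ((3:ℝ)*r) ^ ((n:ℝ) - α') =
        (3:ℝ)^n * r^n * ((3*r) ^ (-α')) := by
      have h3r : (0:ℝ) < 3*r := by linarith
      rw [show (n:ℝ) - α' = (n:ℝ) + (-α') by ring, Real.rpow_add h3r,
        Real.mul_rpow (by norm_num) hr.le, Real.rpow_natCast, Real.rpow_natCast]
    have hmon : ((3:ℝ)*r) ^ (-α') ≤ (1 + ‖c‖ + r) ^ (-α') :=
      Real.rpow_le_rpow_of_nonpos hX (by linarith) (by linarith)
    have h3r0 : (0:ℝ) ≤ (3*r) ^ (-α') := Real.rpow_nonneg (by linarith) _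
    have hq : (0:ℝ) ≤ (n:ℝ)/((n:ℝ)-α') := by
      have h1 : (0:ℝ) < (n:ℝ) - α' := by linarith
      positivity
    calc ∫ x in Metric.ball c r, (1 + ‖x‖) ^ (-α')
        ≤ ((n:ℝ)/((n:ℝ)-α')) * (volume (Metric.ball (0 : Rn n) 1)).toReal
            * ((3:ℝ)*r) ^ ((n:ℝ) - α') := hstep.trans hC
    _ = ((n:ℝ)/((n:ℝ)-α')) * (3:ℝ)^n * ((3*r) ^ (-α'))
          * (r^n * (volume (Metric.ball (0 : Rn n) 1)).toReal) := by rw [hflip]; ring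
    _ ≤ ((3:ℝ)^n * (1 + (n:ℝ)/((n:ℝ)-α'))) * (volume (Metric.ball c r)).toReal
          * (1 + ‖c‖ + r) ^ (-α') := by
        rw [hvol]
        have hfac : ((n:ℝ)/((n:ℝ)-α')) * (3:ℝ)^n * ((3*r) ^ (-α'))
            ≤ ((3:ℝ)^n * (1 + (n:ℝ)/((n:ℝ)-α'))) * (1 + ‖c‖ + r) ^ (-α') := by
          have h1 : ((n:ℝ)/((n:ℝ)-α')) * (3:ℝ)^n ≤ ((3:ℝ)^n * (1 + (n:ℝ)/((n:ℝ)-α'))) := by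
            nlinarith [pow_pos (show (0:ℝ) < 3 by norm_num) n]
          have h2 : (0:ℝ) ≤ ((n:ℝ)/((n:ℝ)-α')) * (3:ℝ)^n := by positivity
          calc ((n:ℝ)/((n:ℝ)-α')) * (3:ℝ)^n * ((3*r) ^ (-α'))
              ≤ ((n:ℝ)/((n:ℝ)-α')) * (3:ℝ)^n * ((1 + ‖c‖ + r) ^ (-α')) :=
                mul_le_mul_of_nonneg_left hmon h2
          _ ≤ _ := mul_le_mul_of_nonneg_right h1 hXa.le
        have hrv : (0:ℝ) ≤ r^n * (volume (Metric.ball (0 : Rn n) 1)).toReal := by positivity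
        nlinarith [mul_le_mul_of_nonneg_right hfac hrv]

lemma step2_aux {t aa gs gR ps pR Cg : ℝ} (ht : 0 < t) (ha : 0 < aa) (hgs : 0 < gs)
    (hgR : 0 < gR) (hps : 0 < ps) (hpR : 0 < pR) (hCg : 0 < Cg)
    (haux : gR * ps ≤ (Cg * pR) * gs) :
    t / (aa * gs) ≤ (Cg * t * pR) / (aa * gR * ps) := by
  rw [div_le_div_iff₀ (by positivity) (by positivity)]
  calc t * (aa * gR * ps) = (t * aa) * (gR * ps) := by ring
  _ ≤ (t * aa) * ((Cg * pR) * gs) := mul_le_mul_of_nonneg_left haux (by positivity)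
  _ = Cg * t * pR * (aa * gs) := by ring

lemma step3_aux {Cg t pR agR DR : ℝ} (hCg : 0 < Cg) (ht : 0 < t) (hpR : 0 ≤ pR)
    (hDR : 0 < DR) (hagR : 0 < agR) (hle : DR ≤ 2 * agR) :
    Cg * t * pR ≤ 2 * Cg * (t / DR) * pR * agR := by
  have h1 : t ≤ 2 * (t / DR) * agR := by
    have heq : 2 * (t / DR) * agR = t * (2 * agR) / DR := by ring
    rw [heq, le_div_iff₀ hDR]
    nlinarith [mul_le_mul_of_nonneg_left hle ht.le]
  calc Cg * t * pR = (Cg * pR) * t := by ring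
  _ ≤ (Cg * pR) * (2 * (t / DR) * agR) := mul_le_mul_of_nonneg_left h1 (by positivity)
  _ = 2 * Cg * (t / DR) * pR * agR := by ring

lemma easy_aux {t L agR : ℝ} (ht : 0 < t) (hL : 1 ≤ L) (hagR : 0 ≤ agR) (hcase : agR ≤ L) :
    t / L ≤ 2 * (t / (L + agR)) := by
  have hDR : 0 < L + agR := by linarith
  rw [div_le_iff₀ (by linarith : (0:ℝ) < L)]
  have hdm : t / (L + agR) * (L + agR) = t := div_mul_cancel₀ t hDR.ne'
  have hX0 : 0 ≤ t / (L + agR) := by positivity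
  nlinarith [mul_nonneg hX0 (by linarith : (0:ℝ) ≤ L - agR)]

lemma budget1 {A V X : ℝ} (hA : 0 ≤ A) (hV : 0 ≤ V) (hX : 0 ≤ X) :
    V * (2 * X) ≤ (2 + A) * V * X := by nlinarith [mul_nonneg (mul_nonneg hA hV) hX]

lemma budget2 {A V X : ℝ} (hA : 0 ≤ A) (hV : 0 ≤ V) (hX : 0 ≤ X) :
    A * V * X ≤ (2 + A) * V * X := by nlinarith [mul_nonneg hV hX]

end AuxStatement16

/-- `Φ_p` satisfies the uniformly Muckenhoupt `𝔸₁(ℝⁿ)` condition. -/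
theorem statement16 (n : ℕ) (hn : 1 ≤ n) (p : ℝ) (hp0 : 0 < p) (hp1 : p ≤ 1) :
    ∃ C : ℝ, 0 < C ∧ ∀ (t : ℝ), 0 < t → ∀ (c : Rn n) (r : ℝ), 0 < r →
      (volume (Metric.ball c r)).toReal⁻¹ * (∫ x in Metric.ball c r, Phi n p x t) ≤
        C * ⨅ x : Metric.ball c r, Phi n p (x : Rn n) t := by
  have hnR : (1:ℝ) ≤ (n:ℝ) := by exact_mod_cast hn
  set α : ℝ := (n:ℝ) * (1 - p) with hαdef
  have hα0 : 0 ≤ α := by nlinarith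
  have hαn : α < (n:ℝ) := by nlinarith
  set β : ℝ := if ∃ k : ℕ, (n:ℝ) * (1/p - 1) = (k:ℝ) then p else 0 with hβdef
  have hβ0 : 0 ≤ β := by
    rw [hβdef]; split
    · exact hp0.le
    · exact le_rfl
  have hβ1 : β ≤ 1 := by
    rw [hβdef]; split
    · exact hp1
    · norm_num
  set γ : ℝ := ((n:ℝ) - α) / 2 with hγdef
  have hγ : 0 < γ := by rw [hγdef]; linarith
  set α' : ℝ := α + γ with hα'def
  have hα'0 : 0 < α' := by rw [hα'def]; linarith
  have hα'n : α' < (n:ℝ) := by rw [hα'def, hγdef]; linarith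
  set Cγ : ℝ := 1 + 1/γ with hCγdef
  have hCγ : 1 ≤ Cγ := by
    rw [hCγdef]
    have : 0 < 1/γ := by positivity
    linarith
  set C₁ : ℝ := (3:ℝ)^n * (1 + (n:ℝ)/((n:ℝ)-α')) with hC₁def
  have hC₁ : 1 ≤ C₁ := by
    rw [hC₁def]
    have h3 : (1:ℝ) ≤ (3:ℝ)^n := one_le_pow₀ (by norm_num)
    have hq : (0:ℝ) ≤ (n:ℝ)/((n:ℝ)-α') := by
      have : (0:ℝ) < (n:ℝ) - α' := by linarith
      positivity
    nlinarith
  have hCC0 : (0:ℝ) < 2 + 2*Cγ*C₁ := by nlinarith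
  refine ⟨2 + 2*Cγ*C₁, hCC0, ?_⟩
  intro t ht c r hr
  set L : ℝ := Real.log (Real.exp 1 + t) with hLdef
  have hL : 1 ≤ L := one_le_log_aux ht.le
  set a : ℝ := t ^ (1 - p) with hadef
  have ha : 0 < a := Real.rpow_pos_of_pos ht _
  set g : ℝ → ℝ := fun s => (1+s)^α * (Real.log (Real.exp 1 + s))^β with hg
  have hg1 : ∀ s, 0 ≤ s → 1 ≤ g s := by
    intro s hs
    simp only [hg]
    have h1 : (1:ℝ) ≤ (1+s)^α := Real.one_le_rpow (by linarith) hα0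
    have h2 : (1:ℝ) ≤ (Real.log (Real.exp 1 + s))^β :=
      Real.one_le_rpow (one_le_log_aux hs) hβ0
    calc (1:ℝ) = 1 * 1 := by ring
    _ ≤ _ := mul_le_mul h1 h2 (by norm_num) (by linarith)
  have hgmono : ∀ s s', 0 ≤ s → s ≤ s' → g s ≤ g s' := by
    intro s s' hs hss
    simp only [hg]
    have h1 : (1+s)^α ≤ (1+s')^α := Real.rpow_le_rpow (by linarith) (by linarith) hα0
    have h2 : (Real.log (Real.exp 1 + s))^β ≤ (Real.log (Real.exp 1 + s'))^β := by
      apply Real.rpow_le_rpow (by linarith [one_le_log_aux hs])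
        (Real.log_le_log (by positivity) (by linarith)) hβ0
    have h3 : (0:ℝ) ≤ (1+s)^α := Real.rpow_nonneg (by linarith) _
    have h4 : (0:ℝ) ≤ (Real.log (Real.exp 1 + s'))^β :=
      Real.rpow_nonneg (by linarith [one_le_log_aux (hs.trans hss)]) _
    have h5 : (0:ℝ) ≤ (Real.log (Real.exp 1 + s))^β :=
      Real.rpow_nonneg (by linarith [one_le_log_aux hs]) _
    have h6 : (0:ℝ) ≤ (1+s')^α := Real.rpow_nonneg (by linarith) _
    exact mul_le_mul h1 h2 h5 h6
  set R : ℝ := ‖c‖ + r with hRdef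
  have hR0 : 0 ≤ R := by have := norm_nonneg c; rw [hRdef]; linarith
  have hR1 : (0:ℝ) < 1 + R := by linarith
  have hgR : 1 ≤ g R := hg1 R hR0
  have hD : ∀ s, 0 ≤ s → 0 < L + a * g s := by
    intro s hs
    have h1 : 0 < g s := lt_of_lt_of_le one_pos (hg1 s hs)
    have h2 : 0 < a * g s := mul_pos ha h1
    linarith
  have hDR : 0 < L + a * g R := hD R hR0
  have hPhi : ∀ x : Rn n, Phi n p x t = t / (L + a * g ‖x‖) := by
    intro x
    have hx0 : (0:ℝ) ≤ ‖x‖ := norm_nonneg x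
    have h1x : (0:ℝ) < 1 + ‖x‖ := by linarith
    have hsplit : (t * (1 + ‖x‖) ^ ((n:ℕ):ℝ)) ^ (1-p)
        = t ^ (1-p) * (1+‖x‖)^((n:ℝ)*(1-p)) := by
      rw [Real.mul_rpow ht.le (Real.rpow_nonneg h1x.le _), ← Real.rpow_mul h1x.le]
    simp only [hg, hadef, hLdef, hαdef, hβdef, Phi]
    by_cases hk : ∃ k : ℕ, (n:ℝ) * (1/p - 1) = (k:ℝ)
    · rw [if_pos hk, if_pos hk, hsplit]
      ring_nf
    · rw [if_neg hk, if_neg hk, hsplit, Real.rpow_zero, mul_one]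
  simp only [hPhi]
  set V : ℝ := (volume (Metric.ball c r)).toReal with hVdef
  have hV : 0 < V := by
    rw [hVdef]
    exact ENNReal.toReal_pos (Metric.measure_ball_pos volume c hr).ne' measure_ball_lt_top.ne
  haveI : Nonempty ↥(Metric.ball c r) := (Metric.nonempty_ball.2 hr).to_subtype
  have hxRball : ∀ x : Rn n, x ∈ Metric.ball c r → ‖x‖ ≤ R := by
    intro x hx
    have hd : ‖x - c‖ < r := by rw [← dist_eq_norm]; exact Metric.mem_ball.1 hx
    have : ‖x‖ ≤ ‖x - c‖ + ‖c‖ := by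
      calc ‖x‖ = ‖(x - c) + c‖ := by rw [sub_add_cancel]
      _ ≤ _ := norm_add_le _ _
    rw [hRdef]; linarith
  have hinf : t / (L + a * g R) ≤ ⨅ x : Metric.ball c r, t / (L + a * g ‖(x : Rn n)‖) := by
    apply le_ciInf
    intro x
    have hx0 : (0:ℝ) ≤ ‖(x : Rn n)‖ := norm_nonneg _
    apply div_le_div_of_nonneg_left ht.le (hD _ hx0)
    have h1 := hgmono _ _ hx0 (hxRball _ x.2)
    have h2 := mul_le_mul_of_nonneg_left h1 ha.le
    linarith
  have hinf0 : 0 ≤ t / (L + a * g R) := by positivity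
  have hcont : Continuous (fun x : Rn n => t / (L + a * g ‖x‖)) := by
    apply Continuous.div continuous_const
    · have c1 : Continuous fun x : Rn n => (1+‖x‖)^α := by
        refine Continuous.rpow_const (by fun_prop) (fun x => Or.inl ?_)
        have := norm_nonneg x; positivity
      have c2 : Continuous fun x : Rn n => (Real.log (Real.exp 1 + ‖x‖))^β := by
        refine Continuous.rpow_const ?_ (fun x => Or.inr hβ0)
        refine Continuous.log (by fun_prop) (fun x => ?_)
        have h := norm_nonneg x
        have := Real.exp_pos 1
        positivity
      rw [hg]
      exact continuous_const.add (continuous_const.mul (c1.mul c2))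
    · intro x
      exact (hD ‖x‖ (norm_nonneg x)).ne'
  have hint : IntegrableOn (fun x : Rn n => t / (L + a * g ‖x‖)) (Metric.ball c r) :=
    (hcont.continuousOn.integrableOn_compact (isCompact_closedBall c r)).mono_set
      Metric.ball_subset_closedBall
  have key : (∫ x in Metric.ball c r, t / (L + a * g ‖x‖)) ≤
      (2 + 2*Cγ*C₁) * V * (t / (L + a * g R)) := by
    by_cases hcase : a * g R ≤ L
    · have hpt : ∀ x ∈ Metric.ball c r, t / (L + a * g ‖x‖) ≤ 2 * (t / (L + a * g R)) := by
        intro x hx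
        have hx0 : (0:ℝ) ≤ ‖x‖ := norm_nonneg x
        have h1 : t / (L + a * g ‖x‖) ≤ t / L := by
          apply div_le_div_of_nonneg_left ht.le (by linarith)
          have h2 : 0 < a * g ‖x‖ := mul_pos ha (lt_of_lt_of_le one_pos (hg1 ‖x‖ hx0))
          linarith
        have hag0 : (0:ℝ) ≤ a * g R := (mul_pos ha (lt_of_lt_of_le one_pos hgR)).le
        have h2 : t / L ≤ 2 * (t / (L + a * g R)) := easy_aux ht hL hag0 hcase
        linarith
      have hcint : IntegrableOn (fun _ : Rn n => 2 * (t / (L + a * g R)))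
          (Metric.ball c r) := integrableOn_const measure_ball_lt_top.ne
      calc (∫ x in Metric.ball c r, t / (L + a * g ‖x‖))
          ≤ ∫ _x in Metric.ball c r, 2 * (t / (L + a * g R)) :=
            setIntegral_mono_on hint hcint measurableSet_ball hpt
      _ = V * (2 * (t / (L + a * g R))) := by rw [setIntegral_const]; rfl
      _ ≤ (2 + 2*Cγ*C₁) * V * (t / (L + a * g R)) :=
          budget1 (by positivity) hV.le hinf0
    · push_neg at hcase
      have hagR : 0 < a * g R := mul_pos ha (lt_of_lt_of_le one_pos hgR)
      set K : ℝ := 2*Cγ*(t / (L + a * g R)) * (1+R)^α' with hKdef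
      have hK0 : 0 ≤ K := by
        rw [hKdef]
        have h1 : 0 ≤ (1+R)^α' := Real.rpow_nonneg hR1.le _
        have : (0:ℝ) ≤ t / (L + a * g R) := hinf0
        positivity
      have hpt : ∀ x ∈ Metric.ball c r, t / (L + a * g ‖x‖) ≤ K * (1+‖x‖)^(-α') := by
        intro x hx
        have hx0 : (0:ℝ) ≤ ‖x‖ := norm_nonneg x
        have hx1 : (0:ℝ) < 1 + ‖x‖ := by linarith
        have hxR : ‖x‖ ≤ R := hxRball x hx
        have hgs : 1 ≤ g ‖x‖ := hg1 _ hx0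
        have haux := aux_g_bound hα0 hβ0 hβ1 hγ hx0 hxR
        have haux' : g R * (1+‖x‖)^α' ≤ (Cγ * (1+R)^α') * g ‖x‖ := by
          rw [hg, hα'def, hCγdef]
          exact haux
        have hgs0 : 0 < g ‖x‖ := lt_of_lt_of_le one_pos hgs
        have hags : 0 < a * g ‖x‖ := mul_pos ha hgs0
        have h1 : t / (L + a * g ‖x‖) ≤ t / (a * g ‖x‖) := by
          apply div_le_div_of_nonneg_left ht.le hags
          linarith
        have hpows : (0:ℝ) < (1+‖x‖)^α' := Real.rpow_pos_of_pos hx1 _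
        have hpowR : (0:ℝ) < (1+R)^α' := Real.rpow_pos_of_pos hR1 _
        have h2 : t / (a * g ‖x‖) ≤ (Cγ * t * (1+R)^α') / (a * g R * (1+‖x‖)^α') :=
          step2_aux ht ha hgs0 (lt_of_lt_of_le one_pos hgR) hpows hpowR
            (lt_of_lt_of_le one_pos hCγ) haux'
        have h3 : (Cγ * t * (1+R)^α') / (a * g R * (1+‖x‖)^α') ≤ K * (1+‖x‖)^(-α') := by
          rw [hKdef, Real.rpow_neg hx1.le]
          rw [div_le_iff₀ (by positivity)]
          have hexp : 2*Cγ*(t / (L + a * g R)) * (1+R)^α' * ((1+‖x‖)^α')⁻¹ *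
              (a * g R * (1+‖x‖)^α') = 2*Cγ*(t / (L + a * g R)) * (1+R)^α' * (a * g R) := by
            field_simp
          rw [hexp]
          have h2agR : L + a * g R ≤ 2 * (a * g R) := by linarith
          exact step3_aux (lt_of_lt_of_le one_pos hCγ) ht hpowR.le hDR hagR h2agR
        linarith
      have hcint : IntegrableOn (fun x : Rn n => K * (1+‖x‖)^(-α')) (Metric.ball c r) := by
        apply Integrable.const_mul
        exact ((cont_aux n α').continuousOn.integrableOn_compact
          (isCompact_closedBall c r)).mono_set Metric.ball_subset_closedBall
      have hB := lemB n hn hα'0 hα'n c hr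
      calc (∫ x in Metric.ball c r, t / (L + a * g ‖x‖))
          ≤ ∫ x in Metric.ball c r, K * (1+‖x‖)^(-α') :=
            setIntegral_mono_on hint hcint measurableSet_ball hpt
      _ = K * ∫ x in Metric.ball c r, (1+‖x‖)^(-α') := by rw [integral_const_mul]
      _ ≤ K * (C₁ * V * (1 + ‖c‖ + r) ^ (-α')) := by
          refine mul_le_mul_of_nonneg_left ?_ hK0
          rw [hC₁def, hVdef]
          exact hB
      _ = 2*Cγ*C₁*V*(t / (L + a * g R)) * ((1+R)^α' * (1+R)^(-α')) := by
          rw [hKdef, hRdef]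
          ring_nf
      _ = 2*Cγ*C₁*V*(t / (L + a * g R)) := by
          rw [← Real.rpow_add hR1, add_neg_cancel, Real.rpow_zero, mul_one]
      _ ≤ (2 + 2*Cγ*C₁) * V * (t / (L + a * g R)) := by
          have := budget2 (A := 2*Cγ*C₁) (by positivity) hV.le hinf0
          calc 2*Cγ*C₁*V*(t / (L + a * g R)) = 2*Cγ*C₁*V*(t / (L + a * g R)) := rfl
          _ ≤ (2 + 2*Cγ*C₁) * V * (t / (L + a * g R)) := this
  have hfinal : V⁻¹ * (∫ x in Metric.ball c r, t / (L + a * g ‖x‖)) ≤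
      (2 + 2*Cγ*C₁) * (t / (L + a * g R)) := by
    rw [inv_mul_le_iff₀ hV]
    calc (∫ x in Metric.ball c r, t / (L + a * g ‖x‖))
        ≤ (2 + 2*Cγ*C₁) * V * (t / (L + a * g R)) := key
    _ = V * ((2 + 2*Cγ*C₁) * (t / (L + a * g R))) := by ring
  calc V⁻¹ * (∫ x in Metric.ball c r, t / (L + a * g ‖x‖))
      ≤ (2 + 2*Cγ*C₁) * (t / (L + a * g R)) := hfinal
  _ ≤ (2 + 2*Cγ*C₁) * ⨅ x : Metric.ball c r, t / (L + a * g ‖(x : Rn n)‖) :=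
      mul_le_mul_of_nonneg_left hinf hCC0.le
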